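/- Let M be an n×n real matrix, X an n×d real matrix, W a d×c real matrix, and α a real number with 0 < α < 1 such that the operator norm of (1−α)·M is strictly less than 1. Define the APPNP iteration by H₀ = X·W and H_k = (1−α)·M·H_{k−1} + α·X·W for k ≥ 1. Then the sequence (H_K) converges as K → ∞, and its limit is α·(I − (1−α)·M)^{−1}·X·W, the PPNP output. -/

import Mathlib

open scoped Matrix.Norms.L2Operator

/-- APPNP converges to PPNP: under `0 < α < 1` and `‖(1-α) • M‖ < 1` (L2 operator norm),
the APPNP iterates `H 0 = X*W`, `H (K+1) = (1-α) • (M * H K) + α • (X*W)` converge as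
`K → ∞` to the PPNP output `α • (I - (1-α) • M)⁻¹ * X * W`. -/
theorem appnp_tendsto_ppnp {n d c : ℕ}
    (M : Matrix (Fin n) (Fin n) ℝ) (X : Matrix (Fin n) (Fin d) ℝ)
    (W : Matrix (Fin d) (Fin c) ℝ) (α : ℝ)
    (hα : 0 < α ∧ α < 1)
    (hnorm : ‖(1 - α) • M‖ < 1)
    (H : ℕ → Matrix (Fin n) (Fin c) ℝ)
    (h0 : H 0 = X * W)
    (hrec : ∀ k : ℕ, H (k + 1) = (1 - α) • (M * H k) + α • (X * W)) :
    Filter.Tendsto H Filter.atTop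
      (nhds (α • (1 - (1 - α) • M)⁻¹ * X * W)) := by
  set A : Matrix (Fin n) (Fin n) ℝ := (1 - α) • M with hA
  set B : Matrix (Fin n) (Fin c) ℝ := X * W with hB
  -- closed form
  have hclosed : ∀ K, H K = α • ((∑ k ∈ Finset.range K, A ^ k) * B) + A ^ K * B := by
    intro K
    induction K with
    | zero => simp [h0]
    | succ K ih =>
      rw [hrec K, ih, Finset.sum_range_succ]
      have : (1 - α) • (M * (α • ((∑ k ∈ Finset.range K, A ^ k) * B) + A ^ K * B))
          = α • ((A * ∑ k ∈ Finset.range K, A ^ k) * B) + A * (A ^ K * B) := by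
        rw [Matrix.mul_add, smul_add, Matrix.mul_smul, smul_comm]
        congr 1
        · rw [← Matrix.smul_mul, ← Matrix.mul_assoc, Matrix.smul_mul]
        · rw [← Matrix.smul_mul]
      rw [this]
      rw [Finset.mul_sum]
      have hpow : ∀ k, A * A ^ k = A ^ (k + 1) := fun k => (pow_succ' A k).symm
      simp_rw [hpow]
      rw [← Matrix.mul_assoc A (A ^ K) B, ← pow_succ' A K]
      rw [← Finset.sum_range_succ, Finset.sum_range_succ', pow_zero, Matrix.add_mul,
        Matrix.one_mul, smul_add]
      abel
  -- geometric series
  have hsum : HasSum (fun k : ℕ => A ^ k) (Ring.inverse (1 - A)) :=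
    hasSum_geom_series_inverse A hnorm
  have hLsum : Filter.Tendsto (fun K => ∑ k ∈ Finset.range K, A ^ k) Filter.atTop
      (nhds (Ring.inverse (1 - A))) := hsum.tendsto_sum_nat
  have hpow0 : Filter.Tendsto (fun K : ℕ => A ^ K) Filter.atTop (nhds 0) :=
    tendsto_pow_atTop_nhds_zero_of_norm_lt_one hnorm
  have hmulcont : Continuous fun Q : Matrix (Fin n) (Fin n) ℝ => Q * B :=
    Continuous.matrix_mul continuous_id continuous_const
  have h1 : Filter.Tendsto (fun K => α • ((∑ k ∈ Finset.range K, A ^ k) * B)) Filter.atTop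
      (nhds (α • (Ring.inverse (1 - A) * B))) :=
    ((hmulcont.tendsto _).comp hLsum).const_smul α
  have h2 : Filter.Tendsto (fun K => A ^ K * B) Filter.atTop (nhds 0) := by
    have := (hmulcont.tendsto _).comp hpow0
    simpa [Function.comp_def] using this
  have htot := h1.add h2
  rw [add_zero] at htot
  have heq : (fun K => α • ((∑ k ∈ Finset.range K, A ^ k) * B) + A ^ K * B) = H := by
    funext K; exact (hclosed K).symm
  rw [heq] at htot
  convert htot using 2
  rw [Matrix.nonsing_inv_eq_ringInverse, Matrix.smul_mul, Matrix.smul_mul, Matrix.mul_assoc]
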